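/- The function K⁽³⁾(φ₁,φ₂,φ₃) = [1-cos(φ₁-φ₂)]^{β₃}[1-cos(φ₂-φ₃)]^{β₁}[1-cos(φ₃-φ₁)]^{β₂}, with β₁ = (σ₁-σ₂-σ₃-1)/2, β₂ = (σ₂-σ₃-σ₁-1)/2, β₃ = (σ₃-σ₁-σ₂-1)/2, satisfies K⁽³⁾(φ_{1α},φ_{2α},φ_{3α}) = ω_α(φ₁)^{σ₁+1} ω_α(φ₂)^{σ₂+1} ω_α(φ₃)^{σ₃+1} K⁽³⁾(φ₁,φ₂,φ₃) for all real α. -/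
import Mathlib

lemma stmt14_pos (α φ : ℝ) : 0 < Real.cosh α - Real.sinh α * Real.cos φ := by
  nlinarith [Real.cosh_sq α, Real.cosh_pos α, Real.cos_sq_le_one φ,
    sq_nonneg (Real.sinh α),
    mul_nonneg (sq_nonneg (Real.sinh α)) (sub_nonneg.mpr (Real.cos_sq_le_one φ))]

lemma stmt14_div_cpow (x w₁ w₂ : ℝ) (hx : 0 ≤ x) (h1 : 0 < w₁) (h2 : 0 < w₂) (s : ℂ) :
    ((x / (w₁ * w₂) : ℝ) : ℂ) ^ s = (x : ℂ) ^ s * (w₁ : ℂ) ^ (-s) * (w₂ : ℂ) ^ (-s) := by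
  have e : (x / (w₁ * w₂) : ℝ) = x * w₁⁻¹ * w₂⁻¹ := by field_simp
  rw [e, Complex.ofReal_mul (x * w₁⁻¹),
    Complex.mul_cpow_ofReal_nonneg (by positivity) (by positivity),
    Complex.ofReal_mul,
    Complex.mul_cpow_ofReal_nonneg hx (by positivity),
    Complex.ofReal_inv, Complex.ofReal_inv,
    Complex.inv_cpow _ _ (by rw [Complex.arg_ofReal_of_nonneg h1.le]; exact Real.pi_ne_zero.symm),
    Complex.inv_cpow _ _ (by rw [Complex.arg_ofReal_of_nonneg h2.le]; exact Real.pi_ne_zero.symm),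
    Complex.cpow_neg, Complex.cpow_neg]

lemma stmt14_key (Φ : ℝ → ℝ → ℝ)
    (hsin : ∀ α φ, Real.sin (Φ α φ) =
      Real.sin φ / (Real.cosh α - Real.sinh α * Real.cos φ))
    (hcos : ∀ α φ, Real.cos (Φ α φ) =
      (-Real.sinh α + Real.cosh α * Real.cos φ) /
        (Real.cosh α - Real.sinh α * Real.cos φ))
    (α a b : ℝ) :
    1 - Real.cos (Φ α a - Φ α b) = (1 - Real.cos (a - b)) /
      ((Real.cosh α - Real.sinh α * Real.cos a) * (Real.cosh α - Real.sinh α * Real.cos b)) := by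
  have ha := stmt14_pos α a
  have hb := stmt14_pos α b
  have h := Real.cosh_sq_sub_sinh_sq α
  rw [Real.cos_sub, Real.cos_sub, hsin, hsin, hcos, hcos]
  field_simp
  linear_combination (1 - Real.cos a * Real.cos b) * h

theorem stmt14 (σ₁ σ₂ σ₃ : ℂ) (Φ : ℝ → ℝ → ℝ)
    (hsin : ∀ α φ, Real.sin (Φ α φ) =
      Real.sin φ / (Real.cosh α - Real.sinh α * Real.cos φ))
    (hcos : ∀ α φ, Real.cos (Φ α φ) =
      (-Real.sinh α + Real.cosh α * Real.cos φ) /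
        (Real.cosh α - Real.sinh α * Real.cos φ))
    (α φ₁ φ₂ φ₃ : ℝ) :
    ((1 - Real.cos (Φ α φ₁ - Φ α φ₂) : ℝ) : ℂ) ^ ((σ₃ - σ₁ - σ₂ - 1) / 2) *
        ((1 - Real.cos (Φ α φ₂ - Φ α φ₃) : ℝ) : ℂ) ^ ((σ₁ - σ₂ - σ₃ - 1) / 2) *
        ((1 - Real.cos (Φ α φ₃ - Φ α φ₁) : ℝ) : ℂ) ^ ((σ₂ - σ₃ - σ₁ - 1) / 2) =
      ((Real.cosh α - Real.sinh α * Real.cos φ₁ : ℝ) : ℂ) ^ (σ₁ + 1) *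
        ((Real.cosh α - Real.sinh α * Real.cos φ₂ : ℝ) : ℂ) ^ (σ₂ + 1) *
        ((Real.cosh α - Real.sinh α * Real.cos φ₃ : ℝ) : ℂ) ^ (σ₃ + 1) *
        (((1 - Real.cos (φ₁ - φ₂) : ℝ) : ℂ) ^ ((σ₃ - σ₁ - σ₂ - 1) / 2) *
          ((1 - Real.cos (φ₂ - φ₃) : ℝ) : ℂ) ^ ((σ₁ - σ₂ - σ₃ - 1) / 2) *
          ((1 - Real.cos (φ₃ - φ₁) : ℝ) : ℂ) ^ ((σ₂ - σ₃ - σ₁ - 1) / 2)) := by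
  have h1 := stmt14_pos α φ₁
  have h2 := stmt14_pos α φ₂
  have h3 := stmt14_pos α φ₃
  have x12 : (0:ℝ) ≤ 1 - Real.cos (φ₁ - φ₂) := by nlinarith [Real.cos_le_one (φ₁ - φ₂)]
  have x23 : (0:ℝ) ≤ 1 - Real.cos (φ₂ - φ₃) := by nlinarith [Real.cos_le_one (φ₂ - φ₃)]
  have x31 : (0:ℝ) ≤ 1 - Real.cos (φ₃ - φ₁) := by nlinarith [Real.cos_le_one (φ₃ - φ₁)]
  rw [stmt14_key Φ hsin hcos α φ₁ φ₂, stmt14_key Φ hsin hcos α φ₂ φ₃,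
    stmt14_key Φ hsin hcos α φ₃ φ₁,
    stmt14_div_cpow _ _ _ x12 h1 h2, stmt14_div_cpow _ _ _ x23 h2 h3,
    stmt14_div_cpow _ _ _ x31 h3 h1]
  have n1 : ((Real.cosh α - Real.sinh α * Real.cos φ₁ : ℝ) : ℂ) ≠ 0 := by
    exact_mod_cast h1.ne'
  have n2 : ((Real.cosh α - Real.sinh α * Real.cos φ₂ : ℝ) : ℂ) ≠ 0 := by
    exact_mod_cast h2.ne'
  have n3 : ((Real.cosh α - Real.sinh α * Real.cos φ₃ : ℝ) : ℂ) ≠ 0 := by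
    exact_mod_cast h3.ne'
  have e1 : σ₁ + 1 = -((σ₃ - σ₁ - σ₂ - 1) / 2) + -((σ₂ - σ₃ - σ₁ - 1) / 2) := by ring
  have e2 : σ₂ + 1 = -((σ₃ - σ₁ - σ₂ - 1) / 2) + -((σ₁ - σ₂ - σ₃ - 1) / 2) := by ring
  have e3 : σ₃ + 1 = -((σ₁ - σ₂ - σ₃ - 1) / 2) + -((σ₂ - σ₃ - σ₁ - 1) / 2) := by ring
  rw [e1, e2, e3, Complex.cpow_add _ _ n1, Complex.cpow_add _ _ n2, Complex.cpow_add _ _ n3]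
  ring
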